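/- Let agents at locations x₁, …, xₙ ∈ ℝ belong to groups G₁, …, Gₘ with positive weights. Suppose a facility location f satisfies the balance condition max_j wⱼ·Lⱼ(f) ≥ max_j wⱼ·Rⱼ(f), where Lⱼ(f) and Rⱼ(f) count agents of group j at-or-left of f and strictly right of f respectively. Assume moreover that no agent lies strictly between f and an arbitrary point y* ≥ f. Then max_j wⱼ·Σ_{i∈Gⱼ}|f − xᵢ| ≤ 2 · max_j wⱼ·Σ_{i∈Gⱼ}|y* − xᵢ|. -/

import Mathlib

theorem stmt3 (n m : ℕ) (hm : 0 < m) (x : Fin n → ℝ)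
    (G : Fin m → Finset (Fin n)) (hG : ∀ j, (G j).Nonempty)
    (w : Fin m → ℝ) (hw : ∀ j, 0 < w j)
    (f ystar : ℝ) (hfy : f ≤ ystar)
    (hgap : ∀ i : Fin n, ¬ (f < x i ∧ x i < ystar))
    (hU : (Finset.univ : Finset (Fin m)).Nonempty)
    (hbal : Finset.univ.sup' hU
        (fun j => w j * (((G j).filter (fun i => f < x i)).card : ℝ))
      ≤ Finset.univ.sup' hU
        (fun j => w j * (((G j).filter (fun i => x i ≤ f)).card : ℝ)))
    (hpos : 0 < Finset.univ.sup' hU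
        (fun j => w j * (((G j).filter (fun i => x i ≤ f)).card : ℝ))) :
    Finset.univ.sup' hU (fun j => w j * ∑ i ∈ G j, |f - x i|)
      ≤ 2 * Finset.univ.sup' hU (fun j => w j * ∑ i ∈ G j, |ystar - x i|) := by
  set A := Finset.univ.sup' hU
      (fun j => w j * (((G j).filter (fun i => x i ≤ f)).card : ℝ)) with hA
  set S := Finset.univ.sup' hU (fun j => w j * ∑ i ∈ G j, |ystar - x i|) with hS
  obtain ⟨k, -, hk⟩ := Finset.exists_mem_eq_sup' hU
      (fun j => w j * (((G j).filter (fun i => x i ≤ f)).card : ℝ))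
  have hAS : A * (ystar - f) ≤ S := by
    have h1 : w k * (((G k).filter (fun i => x i ≤ f)).card : ℝ) * (ystar - f)
        ≤ w k * ∑ i ∈ G k, |ystar - x i| := by
      rw [mul_assoc]
      refine mul_le_mul_of_nonneg_left ?_ (hw k).le
      calc (((G k).filter (fun i => x i ≤ f)).card : ℝ) * (ystar - f)
          = ∑ _i ∈ (G k).filter (fun i => x i ≤ f), (ystar - f) := by
            rw [Finset.sum_const, nsmul_eq_mul]
        _ ≤ ∑ i ∈ (G k).filter (fun i => x i ≤ f), |ystar - x i| := by
            refine Finset.sum_le_sum fun i hi => ?_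
            have hxi : x i ≤ f := (Finset.mem_filter.1 hi).2
            rw [abs_of_nonneg (by linarith)]
            linarith
        _ ≤ ∑ i ∈ G k, |ystar - x i| :=
            Finset.sum_le_sum_of_subset_of_nonneg (Finset.filter_subset _ _)
              (fun i _ _ => abs_nonneg _)
    calc A * (ystar - f) = w k * (((G k).filter (fun i => x i ≤ f)).card : ℝ) * (ystar - f) := by
          rw [hA, hk]
      _ ≤ w k * ∑ i ∈ G k, |ystar - x i| := h1
      _ ≤ S := Finset.le_sup' (fun j => w j * ∑ i ∈ G j, |ystar - x i|) (Finset.mem_univ k)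
  refine Finset.sup'_le _ _ fun j _ => ?_
  have hsplit : ∑ i ∈ G j, |f - x i|
      = ∑ i ∈ (G j).filter (fun i => x i ≤ f), |f - x i|
        + ∑ i ∈ (G j).filter (fun i => ¬ x i ≤ f), |f - x i| :=
    (Finset.sum_filter_add_sum_filter_not _ _ _).symm
  have hleft : ∑ i ∈ (G j).filter (fun i => x i ≤ f), |f - x i|
      ≤ ∑ i ∈ (G j).filter (fun i => x i ≤ f), |ystar - x i| := by
    refine Finset.sum_le_sum fun i hi => ?_
    have hxi : x i ≤ f := (Finset.mem_filter.1 hi).2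
    rw [abs_of_nonneg (by linarith), abs_of_nonneg (by linarith)]
    linarith
  have hright : ∑ i ∈ (G j).filter (fun i => ¬ x i ≤ f), |f - x i|
      = ∑ i ∈ (G j).filter (fun i => ¬ x i ≤ f), |ystar - x i|
        + (((G j).filter (fun i => ¬ x i ≤ f)).card : ℝ) * (ystar - f) := by
    have : ∀ i ∈ (G j).filter (fun i => ¬ x i ≤ f),
        |f - x i| = |ystar - x i| + (ystar - f) := by
      intro i hi
      have hxi : ¬ x i ≤ f := (Finset.mem_filter.1 hi).2
      push_neg at hxi
      have hy : ystar ≤ x i := by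
        by_contra hlt
        exact hgap i ⟨hxi, lt_of_not_ge hlt⟩
      rw [abs_of_nonpos (by linarith), abs_of_nonpos (by linarith)]
      ring
    rw [Finset.sum_congr rfl this, Finset.sum_add_distrib, Finset.sum_const, nsmul_eq_mul]
  have hcard : ((G j).filter (fun i => ¬ x i ≤ f)).card
      = ((G j).filter (fun i => f < x i)).card := by
    congr 1
    apply Finset.filter_congr
    intro i _
    simp [not_le]
  have hRA : w j * (((G j).filter (fun i => ¬ x i ≤ f)).card : ℝ) ≤ A := by
    rw [hcard]
    exact le_trans (Finset.le_sup' (fun j => w j * (((G j).filter (fun i => f < x i)).card : ℝ)) (Finset.mem_univ j)) hbal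
  have hyS : w j * ∑ i ∈ G j, |ystar - x i| ≤ S := Finset.le_sup' (fun j => w j * ∑ i ∈ G j, |ystar - x i|) (Finset.mem_univ j)
  have hRterm : w j * ((((G j).filter (fun i => ¬ x i ≤ f)).card : ℝ) * (ystar - f))
      ≤ A * (ystar - f) := by
    rw [← mul_assoc]
    exact mul_le_mul_of_nonneg_right hRA (by linarith)
  have hsum2 : ∑ i ∈ (G j).filter (fun i => x i ≤ f), |ystar - x i|
        + ∑ i ∈ (G j).filter (fun i => ¬ x i ≤ f), |ystar - x i|
      = ∑ i ∈ G j, |ystar - x i| := Finset.sum_filter_add_sum_filter_not _ _ _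
  have key : w j * ∑ i ∈ G j, |f - x i|
      ≤ w j * ∑ i ∈ G j, |ystar - x i|
        + w j * ((((G j).filter (fun i => ¬ x i ≤ f)).card : ℝ) * (ystar - f)) := by
    rw [hsplit, hright, ← hsum2]
    have := mul_le_mul_of_nonneg_left hleft (hw j).le
    ring_nf
    nlinarith [hw j, hleft]
  calc w j * ∑ i ∈ G j, |f - x i|
      ≤ S + A * (ystar - f) := le_trans key (add_le_add hyS hRterm)
    _ ≤ S + S := by linarith
    _ = 2 * S := by ring
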